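/- Let M be (ε,δ)-DP on a domain of size m, and let {Θ₁,…,Θ_m} be a measurable partition of the output space. Then Σ_{i=1}^m Pr(M(z_i) ∈ Θ_i) ≤ (m e^ε + δ m(m−1))/(e^ε + m − 1), and consequently Γ := Σ_i [Pr(M(z_i) ∈ Θ_i) − Pr_π(M ∈ Θ_i)] ≤ (m−1)(e^ε − 1 + δm)/(e^ε + m − 1) for any prior π. -/
import Mathlib


open MeasureTheory

/-- Let `M` be (ε,δ)-DP on a domain of size `m` (on singleton inputs:
`Pr(M(z) ∈ S) ≤ e^ε Pr(M(z') ∈ S) + δ` for all records and measurable sets), and let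
`{Θ₁,…,Θ_m}` be a measurable partition of the output space.  Then
`Σ_i Pr(M(z_i) ∈ Θ_i) ≤ (m e^ε + δ m(m−1))/(e^ε + m − 1)`, and consequently
`Γ = Σ_i [Pr(M(z_i) ∈ Θ_i) − Pr_π(M ∈ Θ_i)] ≤ (m−1)(e^ε − 1 + δm)/(e^ε + m − 1)`
for any prior `π`. -/
theorem dp_partition_lemma {Θ : Type*} [MeasurableSpace Θ] (m : ℕ) (hm : 1 ≤ m)
    (ε δ : ℝ) (hε : 0 ≤ ε) (hδ : 0 ≤ δ)
    (M : Fin m → Measure Θ) (hprob : ∀ i, IsProbabilityMeasure (M i))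
    (hDP : ∀ i j : Fin m, ∀ S : Set Θ, MeasurableSet S →
      ((M i) S).toReal ≤ Real.exp ε * ((M j) S).toReal + δ)
    (Θs : Fin m → Set Θ) (hmeas : ∀ i, MeasurableSet (Θs i))
    (hdisj : Pairwise fun i j => Disjoint (Θs i) (Θs j))
    (hcover : (⋃ i, Θs i) = Set.univ) :
    (∑ i, ((M i) (Θs i)).toReal ≤
        ((m : ℝ) * Real.exp ε + δ * m * (m - 1)) / (Real.exp ε + m - 1)) ∧
    ∀ π : Fin m → ℝ, (∀ i, 0 ≤ π i) → (∑ i, π i = 1) →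
      ∑ i, (((M i) (Θs i)).toReal - ∑ j, π j * ((M j) (Θs i)).toReal) ≤
        ((m : ℝ) - 1) * (Real.exp ε - 1 + δ * m) / (Real.exp ε + m - 1) := by
  have hexp1 : (1:ℝ) ≤ Real.exp ε := Real.one_le_exp hε
  have hexp0 : (0:ℝ) < Real.exp ε := Real.exp_pos ε
  have hm1 : (1:ℝ) ≤ (m:ℝ) := by exact_mod_cast hm
  have hD : (0:ℝ) < Real.exp ε + (m:ℝ) - 1 := by linarith
  set p : Fin m → Fin m → ℝ := fun i j => ((M i) (Θs j)).toReal with hp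
  have hpnn : ∀ i j, 0 ≤ p i j := fun i j => ENNReal.toReal_nonneg
  -- rows sum to 1
  have h1 : ∀ j : Fin m, ∑ i, p j i = 1 := by
    intro j
    have hU := measure_iUnion (μ := M j) hdisj hmeas
    rw [hcover, measure_univ, tsum_fintype] at hU
    have := ENNReal.toReal_sum (s := Finset.univ) (f := fun i => (M j) (Θs i))
      (fun i _ => measure_ne_top _ _)
    rw [← hU] at this
    simpa [hp] using this.symm
  -- column lower bound
  have hcol : ∀ i : Fin m, ((m:ℝ)-1) * (p i i - δ) + Real.exp ε * p i i
      ≤ Real.exp ε * ∑ j, p j i := by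
    intro i
    rw [Finset.mul_sum, ← Finset.add_sum_erase _ _ (Finset.mem_univ i)]
    have hcard : ((Finset.univ.erase i).card : ℝ) = (m:ℝ) - 1 := by
      simp [Finset.card_erase_of_mem]
      rw [Nat.cast_sub hm]; simp
    have : ((m:ℝ)-1) * (p i i - δ) ≤ ∑ j ∈ Finset.univ.erase i, Real.exp ε * p j i := by
      calc ((m:ℝ)-1) * (p i i - δ)
          = ∑ _j ∈ Finset.univ.erase i, (p i i - δ) := by
            rw [Finset.sum_const, nsmul_eq_mul, hcard]
        _ ≤ ∑ j ∈ Finset.univ.erase i, Real.exp ε * p j i := by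
            apply Finset.sum_le_sum
            intro j _
            have := hDP i j (Θs i) (hmeas i)
            simp only [hp] at *
            linarith
    linarith
  -- key inequality
  set S : ℝ := ∑ i, p i i with hS
  have hkey : S * (Real.exp ε + (m:ℝ) - 1) ≤ (m:ℝ) * Real.exp ε + δ * m * ((m:ℝ) - 1) := by
    have hsum : ∑ i, (((m:ℝ)-1) * (p i i - δ) + Real.exp ε * p i i)
        ≤ Real.exp ε * (m:ℝ) := by
      calc ∑ i, (((m:ℝ)-1) * (p i i - δ) + Real.exp ε * p i i)
          ≤ ∑ i, Real.exp ε * ∑ j, p j i := Finset.sum_le_sum fun i _ => hcol i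
        _ = Real.exp ε * ∑ i, ∑ j, p j i := by rw [Finset.mul_sum]
        _ = Real.exp ε * ∑ j, ∑ i, p j i := by rw [Finset.sum_comm]
        _ = Real.exp ε * (m:ℝ) := by simp [h1]
    have hexpand : ∑ i, (((m:ℝ)-1) * (p i i - δ) + Real.exp ε * p i i)
        = ((m:ℝ)-1) * S - ((m:ℝ)-1) * δ * m + Real.exp ε * S := by
      rw [Finset.sum_add_distrib, ← Finset.mul_sum, ← Finset.mul_sum]
      rw [Finset.sum_sub_distrib, Finset.sum_const, nsmul_eq_mul]
      simp only [Finset.card_univ, Fintype.card_fin, hS]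
      ring
    rw [hexpand] at hsum
    nlinarith [hsum]
  constructor
  · rw [le_div_iff₀ hD]
    nlinarith [hkey]
  · intro π hπ0 hπ1
    have heq : ∑ i, (p i i - ∑ j, π j * p j i) = S - 1 := by
      rw [Finset.sum_sub_distrib]
      congr 1
      rw [Finset.sum_comm]
      calc ∑ j, ∑ i, π j * p j i = ∑ j, π j * ∑ i, p j i := by
            simp [Finset.mul_sum]
        _ = ∑ j, π j := by simp [h1]
        _ = 1 := hπ1
    show ∑ i, (p i i - ∑ j, π j * p j i) ≤ _
    rw [heq, le_div_iff₀ hD]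
    nlinarith [hkey]
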